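/- arXiv:2205.04457 — 3 statements merged into one kernel-verified Lean document; each statement's English description precedes it below -/
import Mathlib

section
/- Every Hermitian operator on ℂ²⊗ℂ² that commutes with the exchange Hamiltonian H^ex_Λ = Λσ₊⊗σ₋ + Λ*σ₋⊗σ₊ (with Λ ≠ 0) also commutes with the dephasing Hamiltonian H^dep_Δ = Δ σ_z⊗σ_z for every Δ ∈ ℝ. -/
open Matrix Complex
open scoped Matrix Kronecker

noncomputable section

/-- Pauli X. -/
def σx : Matrix (Fin 2) (Fin 2) ℂ := !![0, 1; 1, 0]
/-- Pauli Y. -/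
def σy : Matrix (Fin 2) (Fin 2) ℂ := !![0, -Complex.I; Complex.I, 0]
/-- Pauli Z (ground state `0` has eigenvalue -1, excited `1` has +1). -/
def σz : Matrix (Fin 2) (Fin 2) ℂ := !![-1, 0; 0, 1]
/-- Raising operator `|1⟩⟨0|`. -/
def σp : Matrix (Fin 2) (Fin 2) ℂ := !![0, 0; 1, 0]
/-- Lowering operator `|0⟩⟨1|`. -/
def σm : Matrix (Fin 2) (Fin 2) ℂ := !![0, 1; 0, 0]
/-- Projector `|1⟩⟨1|`. -/
def e11 : Matrix (Fin 2) (Fin 2) ℂ := !![0, 0; 0, 1]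

/-- Partial trace over the second factor. -/
def trB (M : Matrix (Fin 2 × Fin 2) (Fin 2 × Fin 2) ℂ) : Matrix (Fin 2) (Fin 2) ℂ :=
  Matrix.of fun i j => ∑ k : Fin 2, M (i, k) (j, k)

/-- Partial trace over the first factor. -/
def trA (M : Matrix (Fin 2 × Fin 2) (Fin 2 × Fin 2) ℂ) : Matrix (Fin 2) (Fin 2) ℂ :=
  Matrix.of fun i j => ∑ k : Fin 2, M (k, i) (k, j)

/-- Excitation-number-conserving interaction Hamiltonian. -/
def Hnum (Λ : ℂ) (Δ : ℝ) : Matrix (Fin 2 × Fin 2) (Fin 2 × Fin 2) ℂ :=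
  Λ • (σp ⊗ₖ σm) + (starRingEnd ℂ Λ) • (σm ⊗ₖ σp) + (Δ : ℂ) • (σz ⊗ₖ σz)

/-- Total excitation number operator `N = |1⟩⟨1|⊗𝟙 + 𝟙⊗|1⟩⟨1|`. -/
def Nop : Matrix (Fin 2 × Fin 2) (Fin 2 × Fin 2) ℂ :=
  e11 ⊗ₖ (1 : Matrix (Fin 2) (Fin 2) ℂ) + (1 : Matrix (Fin 2) (Fin 2) ℂ) ⊗ₖ e11

/-- Bare qubit Hamiltonian `ω|1⟩⟨1|`. -/
def Hbare (ω : ℝ) : Matrix (Fin 2) (Fin 2) ℂ := !![0, 0; 0, (ω : ℂ)]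

/-- Pure (rank-one) density matrix `|ψ⟩⟨ψ|`. -/
def pureRho (ψ : Fin 2 × Fin 2 → ℂ) : Matrix (Fin 2 × Fin 2) (Fin 2 × Fin 2) ℂ :=
  Matrix.vecMulVec ψ (star ψ)

/-- Liouville–von Neumann derivative `ρ̇ = -i[H,ρ]`. -/
def rhodot (H ρ : Matrix (Fin 2 × Fin 2) (Fin 2 × Fin 2) ℂ) :
    Matrix (Fin 2 × Fin 2) (Fin 2 × Fin 2) ℂ :=
  -Complex.I • (H * ρ - ρ * H)

/-- The no-double-excitation state vector `ψ₀|00⟩ + ψ_B|01⟩ + ψ_A|10⟩`. -/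
def ψvec (ψ0 ψB ψA : ℂ) : Fin 2 × Fin 2 → ℂ :=
  fun p => !![ψ0, ψB; ψA, 0] p.1 p.2

/-- The total Hamiltonian `H_A⊗𝟙 + 𝟙⊗H_B + H^num_{Λ,Δ}`. -/
def Htot (ωA ωB : ℝ) (Λ : ℂ) (Δ : ℝ) : Matrix (Fin 2 × Fin 2) (Fin 2 × Fin 2) ℂ :=
  Hbare ωA ⊗ₖ (1 : Matrix (Fin 2) (Fin 2) ℂ) + (1 : Matrix (Fin 2) (Fin 2) ℂ) ⊗ₖ Hbare ωB
    + Hnum Λ Δ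

/-- Rotating-coherence internal energy `U_RC = ρ₁₁ · Im(ρ̇₀₁/ρ₀₁)`. -/
def URC (ρ ρd : Matrix (Fin 2) (Fin 2) ℂ) : ℝ :=
  (ρ 1 1).re * ((ρd 0 1) / (ρ 0 1)).im

/-- Every Hermitian operator commuting with the exchange Hamiltonian (with `Λ ≠ 0`)
also commutes with the dephasing Hamiltonian `Δσ_z⊗σ_z`, for every `Δ`. -/
theorem stmt_11 (Λ : ℂ) (hΛ : Λ ≠ 0)
    (O : Matrix (Fin 2 × Fin 2) (Fin 2 × Fin 2) ℂ) (hO : O.IsHermitian)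
    (hc : Commute O (Λ • (σp ⊗ₖ σm) + (starRingEnd ℂ Λ) • (σm ⊗ₖ σp))) :
    ∀ Δ : ℝ, Commute O ((Δ : ℂ) • (σz ⊗ₖ σz)) := by
  intro Δ
  have E : ∀ a b, (O * (Λ • (σp ⊗ₖ σm) + (starRingEnd ℂ Λ) • (σm ⊗ₖ σp))) a b
      = ((Λ • (σp ⊗ₖ σm) + (starRingEnd ℂ Λ) • (σm ⊗ₖ σp)) * O) a b :=
    fun a b => congrFun (congrFun hc.eq a) b
  have h1 := E (0,0) (0,1)
  have h2 := E (0,0) (1,0)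
  have h3 := E (1,1) (0,1)
  have h4 := E (1,1) (1,0)
  have h5 := E (0,1) (0,0)
  have h6 := E (1,0) (0,0)
  have h7 := E (0,1) (1,1)
  have h8 := E (1,0) (1,1)
  simp only [Matrix.mul_apply, Fintype.sum_prod_type, Fin.sum_univ_two] at h1 h2 h3 h4 h5 h6 h7 h8
  simp [σp, σm, hΛ] at h1 h2 h3 h4 h5 h6 h7 h8
  have hZ : Commute O (σz ⊗ₖ σz) := by
    show O * _ = _ * O
    ext ⟨i, j⟩ ⟨k, l⟩
    fin_cases i <;> fin_cases j <;> fin_cases k <;> fin_cases l <;>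
      simp [Matrix.mul_apply, Fintype.sum_prod_type, Fin.sum_univ_two,
        σz, h1, h2, h3, h4, h5, h6, h7, h8] <;> ring
  exact hZ.smul_right _
end
end

section
/- Define the rotating-coherence internal energy of a qubit with state ρ (with ρ₀₁ ≠ 0) and derivative ρ̇ as U_RC = ρ₁₁ · Im(ρ̇₀₁/ρ₀₁). For the no-double-excitation dynamics with Hamiltonian H = H_A⊗𝟙+𝟙⊗H_B+H^num_{Λ,Δ}, assume ψ₀ψ_A ≠ 0 and ψ₀ψ_B ≠ 0. Then U_RC^A + U_RC^B = ⟨ψ|H|ψ⟩ - Δ. -/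
open Matrix Complex
open scoped Matrix Kronecker

noncomputable section

/-- The rotating-coherence internal energies sum to `⟨ψ|H|ψ⟩ - Δ` in the
no-double-excitation sector (inconsistency offset `-Δ`). -/
theorem stmt_15 (ψ0 ψA ψB Λ : ℂ) (ωA ωB Δ : ℝ)
    (hnorm : Complex.normSq ψ0 + Complex.normSq ψA + Complex.normSq ψB = 1)
    (hA : ψ0 * ψA ≠ 0) (hB : ψ0 * ψB ≠ 0) :
    URC (trB (pureRho (ψvec ψ0 ψB ψA)))
        (trB (rhodot (Htot ωA ωB Λ Δ) (pureRho (ψvec ψ0 ψB ψA))))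
      + URC (trA (pureRho (ψvec ψ0 ψB ψA)))
        (trA (rhodot (Htot ωA ωB Λ Δ) (pureRho (ψvec ψ0 ψB ψA))))
      = (star (ψvec ψ0 ψB ψA) ⬝ᵥ (Htot ωA ωB Λ Δ).mulVec (ψvec ψ0 ψB ψA)).re - Δ := by
  have hψ0 : Complex.normSq ψ0 ≠ 0 := by
    simp [Complex.normSq_eq_zero]; rintro rfl; exact hA (by simp)
  have hψA : Complex.normSq ψA ≠ 0 := by
    simp [Complex.normSq_eq_zero]; rintro rfl; exact hA (by simp)
  have hψB : Complex.normSq ψB ≠ 0 := by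
    simp [Complex.normSq_eq_zero]; rintro rfl; exact hB (by simp)
  simp only [URC, trB, trA, pureRho, rhodot, Htot, Hnum, Hbare, σp, σm, σz, e11, ψvec,
    Matrix.kroneckerMap_apply, Matrix.vecMulVec_apply, Matrix.of_apply, Matrix.sub_apply,
    Matrix.add_apply, Matrix.smul_apply, Matrix.mul_apply, Matrix.one_apply, dotProduct,
    Matrix.mulVec, Fintype.sum_prod_type, Fin.sum_univ_two, Pi.star_apply, smul_eq_mul,
    Matrix.cons_val', Matrix.cons_val_zero, Matrix.cons_val_one, Matrix.head_cons,
    Matrix.empty_val', Matrix.cons_val_fin_one, Matrix.head_fin_const, star_zero,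
    if_true, Fin.isValue, one_ne_zero, zero_ne_one, if_false, mul_zero, zero_mul,
    mul_one, one_mul, add_zero, zero_add, mul_ite, ite_mul, Complex.star_def]
  simp only [Complex.add_im, Complex.sub_im, Complex.mul_im, Complex.mul_re,
    Complex.add_re, Complex.sub_re, Complex.neg_im, Complex.neg_re,
    Complex.inv_im, Complex.inv_re, Complex.I_re, Complex.I_im, div_eq_mul_inv,
    map_zero, Complex.one_re, Complex.one_im, neg_neg, neg_zero, mul_zero, zero_mul,
    mul_one, one_mul, add_zero, zero_add, sub_zero, zero_sub,
    Complex.ofReal_re, Complex.ofReal_im, Complex.conj_re, Complex.conj_im,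
    Complex.normSq_mul, Complex.normSq_conj]
  field_simp [hψ0, hψA, hψB]
  simp only [Complex.normSq_apply] at hnorm ⊢
  linear_combination (-(Δ * (ψ0.re*ψ0.re+ψ0.im*ψ0.im) * (ψA.re*ψA.re+ψA.im*ψA.im) * (ψB.re*ψB.re+ψB.im*ψB.im))) * hnorm
end
end

section
/- In the pure exchange case (Δ = 0) with no double excitation, the rotating-coherence internal energies satisfy the exact consistency relation U_RC^A + U_RC^B = ⟨ψ|H|ψ⟩, provided ψ₀ψ_A ≠ 0 and ψ₀ψ_B ≠ 0. -/
open Matrix Complex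
open scoped Matrix Kronecker

noncomputable section

/-- Pure exchange case (`Δ = 0`): exact consistency `U_RC^A + U_RC^B = ⟨ψ|H|ψ⟩`. -/
theorem stmt_16 (ψ0 ψA ψB Λ : ℂ) (ωA ωB : ℝ)
    (hnorm : Complex.normSq ψ0 + Complex.normSq ψA + Complex.normSq ψB = 1)
    (hA : ψ0 * ψA ≠ 0) (hB : ψ0 * ψB ≠ 0) :
    URC (trB (pureRho (ψvec ψ0 ψB ψA)))
        (trB (rhodot (Htot ωA ωB Λ 0) (pureRho (ψvec ψ0 ψB ψA))))
      + URC (trA (pureRho (ψvec ψ0 ψB ψA)))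
        (trA (rhodot (Htot ωA ωB Λ 0) (pureRho (ψvec ψ0 ψB ψA))))
      = (star (ψvec ψ0 ψB ψA) ⬝ᵥ (Htot ωA ωB Λ 0).mulVec (ψvec ψ0 ψB ψA)).re := by
  have h0 : ψ0 ≠ 0 := fun h => hA (by simp [h])
  have hA' : ψA ≠ 0 := fun h => hA (by simp [h])
  have hB' : ψB ≠ 0 := fun h => hB (by simp [h])
  simp only [URC, trA, trB, rhodot, pureRho, Htot, Hnum, Hbare, ψvec, σp, σm, σz,
    Matrix.vecMulVec_apply, Matrix.mul_apply, Matrix.smul_apply, Matrix.add_apply,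
    Matrix.sub_apply, Matrix.neg_apply, Matrix.kroneckerMap_apply, Matrix.of_apply,
    Fintype.sum_prod_type, Fin.sum_univ_two, Matrix.one_apply, dotProduct,
    Matrix.mulVec, Pi.star_apply]
  norm_num [Matrix.one_apply]
  have n0 : Complex.normSq ψ0 ≠ 0 := by simpa using h0
  have nA : Complex.normSq ψA ≠ 0 := by simpa using hA'
  have nB : Complex.normSq ψB ≠ 0 := by simpa using hB'
  simp only [Complex.div_im, Complex.normSq_mul, Complex.normSq_conj, Complex.mul_re, Complex.mul_im,
    Complex.neg_re, Complex.neg_im, Complex.add_re, Complex.add_im, Complex.I_re,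
    Complex.I_im, Complex.conj_re, Complex.conj_im, Complex.ofReal_re, Complex.ofReal_im]
  field_simp
  simp only [Complex.normSq_apply]
  ring
end
end
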